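/- Let (W,S) be a Coxeter system with length function ℓ, and let φ : W → W be a group automorphism satisfying ℓ(φ(w)) = ℓ(w) for all w ∈ W. Fix d ≥ 1, define the group automorphism σ of W^d by σ(g₁,…,g_d) := (φ(g_d), g₁, …, g_{d−1}), and define L : W^d → ℕ by L(g₁,…,g_d) := ℓ(g₁)+⋯+ℓ(g_d). For x = (x₁,…,x_d) ∈ W^d set x' := x_d x_{d−1} ⋯ x₁ ∈ W. Then the following are equivalent: (i) for every m ≥ 1, L(x · σ(x) · σ²(x) ⋯ σ^{m−1}(x)) = m · L(x); (ii) ℓ(x') = ℓ(x₁)+⋯+ℓ(x_d), and for every m ≥ 1, ℓ(x' · φ(x') · φ²(x') ⋯ φ^{m−1}(x')) = m · ℓ(x'). -/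

import Mathlib

/-- The twisted cyclic shift `σ(g₁,…,g_d) = (φ(g_d), g₁, …, g_{d−1})` on `W^d`
(0-indexed: `(σ g) 0 = φ (g (d-1))` and `(σ g) i = g (i-1)` for `i > 0`). -/
def cyc {W : Type*} (d : ℕ) (φ : W → W) (g : Fin d → W) : Fin d → W :=
  fun i =>
    if _h : (i : ℕ) = 0 then φ (g ⟨d - 1, by have := i.isLt; omega⟩)
    else g ⟨(i : ℕ) - 1, by have := i.isLt; omega⟩

namespace Stmt6Aux

variable {B W : Type*} [Group W] {M : CoxeterMatrix B} (cs : CoxeterSystem M W)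

lemma len_list_le (l : List W) : cs.length l.prod ≤ (l.map cs.length).sum := by
  induction l with
  | nil => simp
  | cons a t ih =>
      simp only [List.prod_cons, List.map_cons, List.sum_cons]
      exact le_trans (cs.length_mul_le a t.prod) (by omega)

/-- the sequence `X n = φ^{-⌊n/d⌋}(x_{n mod d})` (only used for `n < d`). -/
def Xs {W : Type*} [Group W] (d : ℕ) (φ : W ≃* W) (x : Fin d → W) (hd : 0 < d) (n : ℤ) : W :=
  φ^[(-(n / (d:ℤ))).toNat]
    (x ⟨(n % (d:ℤ)).toNat, by
      have h0 : (0:ℤ) < (d:ℤ) := by exact_mod_cast hd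
      have h1 : 0 ≤ n % (d:ℤ) := Int.emod_nonneg n h0.ne'
      have h2 := Int.emod_lt_of_pos n h0
      omega⟩)

variable {d : ℕ} (φ : W ≃* W) (x : Fin d → W) (hd : 0 < d)

lemma Xs_of_nonneg {n : ℤ} (h0 : 0 ≤ n) (h1 : n < d) (i : Fin d) (hi : (i : ℤ) = n) :
    Xs d φ x hd n = x i := by
  have hdiv : n / (d:ℤ) = 0 := Int.ediv_eq_zero_of_lt h0 h1
  have hmod : n % (d:ℤ) = n := Int.emod_eq_of_lt h0 h1
  simp only [Xs, hdiv, hmod, neg_zero, Int.toNat_zero, Function.iterate_zero, id_eq]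
  congr 1
  apply Fin.ext
  show n.toNat = (i : ℕ)
  omega

lemma Xs_shift {n : ℤ} (h1 : n < d) :
    Xs d φ x hd (n - d) = φ (Xs d φ x hd n) := by
  have hd0 : (d:ℤ) ≠ 0 := by exact_mod_cast hd.ne'
  have hdiv : (n - d) / (d:ℤ) = n / (d:ℤ) - 1 := by
    have := Int.add_mul_ediv_right n (-1) hd0
    rw [show n + (-1) * (d:ℤ) = n - d by ring] at this
    omega
  have hmod : (n - d) % (d:ℤ) = n % (d:ℤ) := Int.sub_emod_right n d
  have hq : 0 ≤ -(n / (d:ℤ)) := by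
    rcases le_or_gt 0 n with h | h
    · have : n / (d:ℤ) = 0 := Int.ediv_eq_zero_of_lt h h1
      omega
    · have : n / (d:ℤ) < 0 := Int.ediv_neg_of_neg_of_pos h (by omega)
      omega
  have ht : (-((n - d) / (d:ℤ))).toNat = (-(n / (d:ℤ))).toNat + 1 := by
    rw [hdiv]; omega
  simp only [Xs, hmod, ht, Function.iterate_succ_apply']

lemma len_iter (hφ : ∀ u : W, cs.length (φ u) = cs.length u) (k : ℕ) (w : W) :
    cs.length (φ^[k] w) = cs.length w := by
  induction k with
  | zero => rfl
  | succ k ih => rw [Function.iterate_succ_apply', hφ, ih]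

lemma len_Xs (hφ : ∀ u : W, cs.length (φ u) = cs.length u) (n : ℤ) :
    cs.length (Xs d φ x hd n) =
      cs.length (x ⟨(n % (d:ℤ)).toNat, by
        have h0 : (0:ℤ) < (d:ℤ) := by exact_mod_cast hd
        have h1 : 0 ≤ n % (d:ℤ) := Int.emod_nonneg n h0.ne'
        have h2 := Int.emod_lt_of_pos n h0
        omega⟩) := by
  simp only [Xs, len_iter cs φ hφ]

/-- the segment product `X e · X (e-1) ⋯ X (e-m+1)`. -/
def Sg (e : ℤ) (m : ℕ) : W :=
  (List.ofFn fun k : Fin m => Xs d φ x hd (e - k)).prod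

lemma Sg_add (e : ℤ) (a b : ℕ) :
    Sg φ x hd e (a + b) = Sg φ x hd e a * Sg φ x hd (e - a) b := by
  simp only [Sg, List.ofFn_add, List.prod_append]
  congr 1
  have : (fun j : Fin b => Xs d φ x hd (e - ↑↑(Fin.natAdd a j)))
      = fun k : Fin b => Xs d φ x hd (e - ↑a - ↑↑k) := by
    funext j
    congr 1
    simp only [Fin.coe_natAdd]
    push_cast
    ring
  rw [this]


lemma Sg_le (e : ℤ) (m : ℕ) :
    cs.length (Sg φ x hd e m) ≤ ∑ k : Fin m, cs.length (Xs d φ x hd (e - k)) := by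
  have := len_list_le cs (List.ofFn fun k : Fin m => Xs d φ x hd (e - k))
  rwa [List.map_ofFn, List.sum_ofFn] at this

lemma Sg_shift (e : ℤ) (he : e < d) (m : ℕ) :
    Sg φ x hd (e - d) m = φ (Sg φ x hd e m) := by
  simp only [Sg]
  rw [map_list_prod, List.map_ofFn]
  refine congrArg List.prod (congrArg List.ofFn (funext fun k => ?_))
  show Xs d φ x hd (e - d - k) = φ (Xs d φ x hd (e - k))
  rw [show e - (d:ℤ) - k = (e - k) - d by ring]
  exact Xs_shift φ x hd (by have : (0:ℤ) ≤ (k:ℤ) := Int.ofNat_nonneg _; omega)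

lemma Sg_shift_iter (e : ℤ) (he : e < d) (m j : ℕ) :
    Sg φ x hd (e - j * d) m = φ^[j] (Sg φ x hd e m) := by
  induction j with
  | zero => simp
  | succ j ih =>
      rw [Function.iterate_succ_apply', ← ih, ← Sg_shift φ x hd _ (by
        have h1 : (0:ℤ) ≤ (j:ℤ) * d := by positivity
        omega)]
      congr 1
      push_cast
      ring

/-- the "reduced segment" predicate. -/
def Red (e : ℤ) (m : ℕ) : Prop :=
  cs.length (Sg φ x hd e m) = ∑ k : Fin m, cs.length (Xs d φ x hd (e - k))

lemma red_sub {e : ℤ} {a m b : ℕ} (h : Red cs φ x hd e (a + m + b)) :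
    Red cs φ x hd (e - a) m := by
  unfold Stmt6Aux.Red at h ⊢
  rw [show a + m + b = a + (m + b) from by omega, Sg_add, Sg_add] at h
  -- split the sum in `h` into three pieces
  have hsum : ∑ k : Fin (a + (m + b)), cs.length (Xs d φ x hd (e - k)) =
      (∑ k : Fin a, cs.length (Xs d φ x hd (e - k))) +
      ((∑ k : Fin m, cs.length (Xs d φ x hd (e - a - k))) +
       (∑ k : Fin b, cs.length (Xs d φ x hd (e - a - m - k)))) := by
    simp only [Fin.sum_univ_add, Fin.coe_castAdd, Fin.coe_natAdd]
    refine congrArg₂ (· + ·) rfl (congrArg₂ (· + ·) ?_ ?_) <;>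
      exact Finset.sum_congr rfl fun k _ => by congr 2; push_cast; ring
  rw [hsum] at h
  have b1 := Sg_le cs φ x hd e a
  have b2 := Sg_le cs φ x hd (e - a) m
  have b3 := Sg_le cs φ x hd (e - a - m) b
  have m1 := cs.length_mul_le (Sg φ x hd e a) (Sg φ x hd (e - a) m * Sg φ x hd (e - a - m) b)
  have m2 := cs.length_mul_le (Sg φ x hd (e - a) m) (Sg φ x hd (e - a - m) b)
  omega


lemma sum_shift {d : ℕ} (hd : 0 < d) (g : ℤ → ℕ) (hg : ∀ n : ℤ, g (n - d) = g n) (m : ℕ) :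
    ∑ i : Fin d, g ((i : ℤ) - (m : ℤ)) = ∑ i : Fin d, g (i : ℤ) := by
  induction m with
  | zero => simp
  | succ m ih =>
      rw [← ih]
      obtain ⟨d', rfl⟩ : ∃ d', d = d' + 1 := ⟨d - 1, by omega⟩
      rw [Fin.sum_univ_eq_sum_range (fun i : ℕ => g ((i : ℤ) - ((m + 1 : ℕ) : ℤ))) (d' + 1),
        Finset.sum_range_succ' (fun i : ℕ => g ((i : ℤ) - ((m + 1 : ℕ) : ℤ))) d',
        Fin.sum_univ_eq_sum_range (fun i : ℕ => g ((i : ℤ) - (m : ℤ))) (d' + 1),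
        Finset.sum_range_succ]
      congr 1
      · exact Finset.sum_congr rfl fun i _ => congrArg g (by push_cast; ring)
      · rw [← hg ((d' : ℤ) - m)]
        exact congrArg g (by push_cast; ring)


lemma Xs_fin (i : Fin d) : Xs d φ x hd (i : ℤ) = x i :=
  Xs_of_nonneg φ x hd (Int.ofNat_nonneg _) (by exact_mod_cast i.isLt) i rfl

lemma len_Xs_per (hφ : ∀ u : W, cs.length (φ u) = cs.length u) (n : ℤ) :
    cs.length (Xs d φ x hd (n - d)) = cs.length (Xs d φ x hd n) := by
  have h : (n - (d:ℤ)) % d = n % d := Int.sub_emod_right n d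
  rw [len_Xs cs φ x hd hφ, len_Xs cs φ x hd hφ]
  exact congrArg cs.length (congrArg x (Fin.ext (by show ((n - (d:ℤ)) % ↑d).toNat = (n % ↑d).toNat; omega)))

lemma cyc_apply_zero {W : Type*} {n : ℕ} (hn : 0 < n) (ψ : W → W) (g : Fin n → W)
    (i : Fin n) (h : (i : ℕ) = 0) :
    cyc n ψ g i = ψ (g ⟨n - 1, Nat.sub_lt hn Nat.one_pos⟩) := by
  simp only [cyc, dif_pos h]

lemma cyc_apply_pos {W : Type*} {n : ℕ} (ψ : W → W) (g : Fin n → W)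
    (i : Fin n) (h : (i : ℕ) ≠ 0) :
    cyc n ψ g i = g ⟨(i : ℕ) - 1, lt_of_le_of_lt (Nat.sub_le _ _) i.isLt⟩ := by
  simp only [cyc, dif_neg h]

lemma cyc_iterate (k : ℕ) (i : Fin d) :
    (cyc d ⇑φ)^[k] x i = Xs d φ x hd ((i : ℤ) - k) := by
  induction k generalizing i with
  | zero =>
      simp only [Function.iterate_zero, id_eq, Nat.cast_zero, sub_zero]
      exact (Xs_fin φ x hd i).symm
  | succ k ih =>
      rw [Function.iterate_succ_apply']
      by_cases h : (i : ℕ) = 0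
      · rw [cyc_apply_zero hd ⇑φ _ i h, ih ⟨d - 1, by omega⟩]
        show φ (Xs d φ x hd ((((d - 1 : ℕ) : ℤ)) - k)) = _
        rw [← Xs_shift φ x hd (n := (((d - 1 : ℕ) : ℤ)) - k) (by
            have hk : (0:ℤ) ≤ (k:ℤ) := Int.ofNat_nonneg _
            omega)]
        exact congrArg (Xs d φ x hd) (by omega)
      · rw [cyc_apply_pos ⇑φ _ i h, ih ⟨(i : ℕ) - 1, by have := i.isLt; omega⟩]
        show Xs d φ x hd ((((i : ℕ) - 1 : ℕ) : ℤ) - k) = _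
        exact congrArg (Xs d φ x hd) (by omega)

lemma xprime_eq : (List.ofFn x).reverse.prod = Sg φ x hd ((d:ℤ) - 1) d := by
  unfold Sg
  congr 1
  apply List.ext_getElem (by simp)
  intro i h1 h2
  simp only [List.length_reverse, List.length_ofFn] at h1
  simp only [List.getElem_reverse, List.getElem_ofFn, List.length_ofFn]
  rw [Xs_of_nonneg φ x hd (by push_cast; omega) (by push_cast; omega)
    ⟨d - 1 - i, by omega⟩ (by push_cast; omega)]

lemma sum_seg_d : ∑ k : Fin d, cs.length (Xs d φ x hd ((d:ℤ) - 1 - k)) =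
    ∑ i, cs.length (x i) := by
  have h : ∀ k : Fin d, cs.length (Xs d φ x hd ((d:ℤ) - 1 - k)) = cs.length (x k.rev) := by
    intro k
    rw [Xs_of_nonneg φ x hd (by have := k.isLt; push_cast; omega)
      (by have := k.isLt; push_cast; omega) k.rev
      (by simp only [Fin.val_rev]; have := k.isLt; push_cast; omega)]
  simp only [h]
  exact Fintype.sum_bijective Fin.rev Fin.rev_bijective _ _ fun k => rfl

lemma big_eq (m : ℕ) :
    (List.ofFn fun k : Fin m => (⇑φ)^[(k : ℕ)] ((List.ofFn x).reverse.prod)).prod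
      = Sg φ x hd ((d:ℤ) - 1) (m * d) := by
  induction m with
  | zero => simp [Sg]
  | succ m ih =>
      rw [List.ofFn_succ', List.prod_concat]
      have h1 : (List.ofFn fun i : Fin m =>
          (⇑φ)^[((i.castSucc : Fin (m+1)) : ℕ)] ((List.ofFn x).reverse.prod)).prod
          = Sg φ x hd ((d:ℤ) - 1) (m * d) := by
        rw [← ih]
        congr 1
      rw [h1]
      show Sg φ x hd ((d:ℤ) - 1) (m * d) * (⇑φ)^[(Fin.last m : ℕ)] ((List.ofFn x).reverse.prod)
          = _
      rw [Fin.val_last, xprime_eq φ x hd, ← Sg_shift_iter φ x hd _ (by omega) d m]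
      rw [show (m + 1) * d = m * d + d from by ring, Sg_add]
      norm_cast

lemma sum_seg_md (hφ : ∀ u : W, cs.length (φ u) = cs.length u) (m : ℕ) :
    ∑ k : Fin (m * d), cs.length (Xs d φ x hd ((d:ℤ) - 1 - k)) =
      m * ∑ i, cs.length (x i) := by
  induction m with
  | zero => rw [Nat.zero_mul]; simp
  | succ m ih =>
      rw [show (m + 1) * d = m * d + d from by ring, Fin.sum_univ_add]
      have e1 : ∑ k : Fin (m * d),
          cs.length (Xs d φ x hd ((d:ℤ) - 1 - (Fin.castAdd d k : ℕ))) =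
          m * ∑ i, cs.length (x i) := by
        rw [← ih]
        exact Finset.sum_congr rfl fun k _ => by rw [Fin.coe_castAdd]
      rw [e1]
      have e2 : ∑ j : Fin d,
          cs.length (Xs d φ x hd ((d:ℤ) - 1 - (Fin.natAdd (m * d) j : ℕ))) =
          ∑ i, cs.length (x i) := by
        have hb : ∀ j : Fin d,
            cs.length (Xs d φ x hd ((j : ℤ) - ((m * d : ℕ) : ℤ))) =
            cs.length (Xs d φ x hd ((d:ℤ) - 1 - (Fin.natAdd (m * d) j.rev : ℕ))) := by
          intro j
          refine congrArg cs.length (congrArg (Xs d φ x hd) ?_)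
          simp only [Fin.coe_natAdd, Fin.val_rev]
          have := j.isLt
          push_cast
          omega
        rw [← Fintype.sum_bijective Fin.rev Fin.rev_bijective _ _ hb]
        rw [sum_shift hd (fun n => cs.length (Xs d φ x hd n))
          (fun n => len_Xs_per cs φ x hd hφ n) (m * d)]
        exact Finset.sum_congr rfl fun i _ => by rw [Xs_fin]
      rw [e2]
      ring


lemma comp_eq (m : ℕ) (i : Fin d) :
    ((List.ofFn fun k : Fin m => (cyc d ⇑φ)^[(k : ℕ)] x).prod) i
      = Sg φ x hd (i : ℤ) m := by
  rw [Pi.list_prod_apply, List.map_ofFn]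
  unfold Sg
  refine congrArg List.prod (congrArg List.ofFn (funext fun k => ?_))
  show (cyc d ⇑φ)^[(k : ℕ)] x i = _
  exact cyc_iterate φ x hd (k : ℕ) i

lemma red_zero (e : ℤ) : Red cs φ x hd e 0 := by
  simp [Red, Sg]

lemma inner_sum (hφ : ∀ u : W, cs.length (φ u) = cs.length u) (c : ℕ) :
    ∑ i : Fin d, cs.length (Xs d φ x hd ((i : ℤ) - (c : ℤ))) = ∑ i, cs.length (x i) := by
  rw [sum_shift hd (fun n => cs.length (Xs d φ x hd n)) (len_Xs_per cs φ x hd hφ) c]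
  exact Finset.sum_congr rfl fun i _ => by rw [Xs_fin]

lemma double_sum (hφ : ∀ u : W, cs.length (φ u) = cs.length u) (m : ℕ) :
    ∑ i : Fin d, ∑ k : Fin m, cs.length (Xs d φ x hd ((i : ℤ) - ((k : ℕ) : ℤ))) =
      m * ∑ i, cs.length (x i) := by
  rw [Finset.sum_comm]
  trans ∑ _k : Fin m, ∑ i, cs.length (x i)
  · exact Finset.sum_congr rfl fun k _ => inner_sum cs φ x hd hφ (k : ℕ)
  · simp [Finset.sum_const, Finset.card_univ, mul_comm]

lemma lhs_iff (hφ : ∀ u : W, cs.length (φ u) = cs.length u) :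
    (∀ m : ℕ, 1 ≤ m →
        ∑ i : Fin d, cs.length (Sg φ x hd (i : ℤ) m) = m * ∑ i, cs.length (x i)) ↔
      ∀ (m : ℕ) (i : Fin d), Red cs φ x hd (i : ℤ) m := by
  constructor
  · intro h m i
    rcases Nat.eq_zero_or_pos m with rfl | hm
    · exact red_zero cs φ x hd _
    have hub : ∀ j : Fin d, j ∈ Finset.univ →
        cs.length (Sg φ x hd (j : ℤ) m) ≤
          ∑ k : Fin m, cs.length (Xs d φ x hd ((j : ℤ) - k)) :=
      fun j _ => Sg_le cs φ x hd _ m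
    have htot : ∑ j : Fin d, cs.length (Sg φ x hd (j : ℤ) m) =
        ∑ j : Fin d, ∑ k : Fin m, cs.length (Xs d φ x hd ((j : ℤ) - k)) := by
      rw [h m hm]
      exact (double_sum cs φ x hd hφ m).symm
    exact (Finset.sum_eq_sum_iff_of_le hub).mp htot i (Finset.mem_univ i)
  · intro h m _
    trans ∑ i : Fin d, ∑ k : Fin m, cs.length (Xs d φ x hd ((i : ℤ) - k))
    · exact Finset.sum_congr rfl fun i _ => h m i
    · exact double_sum cs φ x hd hφ m

lemma part1_iff :
    cs.length ((List.ofFn x).reverse.prod) = ∑ i, cs.length (x i) ↔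
      Red cs φ x hd ((d : ℤ) - 1) d := by
  unfold Stmt6Aux.Red
  rw [xprime_eq φ x hd, sum_seg_d cs φ x hd]

end Stmt6Aux

theorem stmt6 {B W : Type*} [Group W] {M : CoxeterMatrix B} (cs : CoxeterSystem M W)
    (φ : W ≃* W) (hφ : ∀ u : W, cs.length (φ u) = cs.length u)
    (d : ℕ) (hd : 1 ≤ d) (x : Fin d → W) :
    (∀ m : ℕ, 1 ≤ m →
        ∑ i, cs.length (((List.ofFn fun k : Fin m => (cyc d ⇑φ)^[(k : ℕ)] x).prod) i) =
          m * ∑ i, cs.length (x i)) ↔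
      (cs.length ((List.ofFn x).reverse.prod) = ∑ i, cs.length (x i) ∧
        ∀ m : ℕ, 1 ≤ m →
          cs.length
              ((List.ofFn fun k : Fin m =>
                (⇑φ)^[(k : ℕ)] ((List.ofFn x).reverse.prod)).prod) =
            m * cs.length ((List.ofFn x).reverse.prod)) := by
  have hd0 : 0 < d := hd
  have hcast : (((d - 1 : ℕ)) : ℤ) = (d : ℤ) - 1 := by omega
  -- restate condition (i) in terms of `Sg`
  have hLHS : (∀ m : ℕ, 1 ≤ m →
      ∑ i, cs.length (((List.ofFn fun k : Fin m => (cyc d ⇑φ)^[(k : ℕ)] x).prod) i) =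
        m * ∑ i, cs.length (x i)) ↔
      (∀ m : ℕ, 1 ≤ m →
        ∑ i : Fin d, cs.length (Stmt6Aux.Sg φ x hd0 (i : ℤ) m) = m * ∑ i, cs.length (x i)) := by
    constructor <;> intro h m hm <;> rw [← h m hm] <;>
      exact Finset.sum_congr rfl fun i _ => by rw [Stmt6Aux.comp_eq φ x hd0 m i]
  rw [hLHS, Stmt6Aux.lhs_iff cs φ x hd0 hφ]
  constructor
  · intro P
    have hP1 : Stmt6Aux.Red cs φ x hd0 ((d : ℤ) - 1) d := by
      have := P d ⟨d - 1, by omega⟩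
      simpa only [hcast] using this
    have h1 : cs.length ((List.ofFn x).reverse.prod) = ∑ i, cs.length (x i) :=
      (Stmt6Aux.part1_iff cs φ x hd0).mpr hP1
    refine ⟨h1, fun m hm => ?_⟩
    have hPm : Stmt6Aux.Red cs φ x hd0 ((d : ℤ) - 1) (m * d) := by
      have := P (m * d) ⟨d - 1, by omega⟩
      simpa only [hcast] using this
    rw [Stmt6Aux.big_eq φ x hd0 m, h1]
    unfold Stmt6Aux.Red at hPm
    rw [hPm]
    exact Stmt6Aux.sum_seg_md cs φ x hd0 hφ m
  · intro ⟨h1, h2⟩ m i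
    -- first, `Red (d-1) (M*d)` for every `M`
    have Q : ∀ Mq : ℕ, Stmt6Aux.Red cs φ x hd0 ((d : ℤ) - 1) (Mq * d) := by
      intro Mq
      rcases Nat.eq_zero_or_pos Mq with rfl | hMq
      · rw [Nat.zero_mul]; exact Stmt6Aux.red_zero cs φ x hd0 _
      unfold Stmt6Aux.Red
      rw [← Stmt6Aux.big_eq φ x hd0 Mq, h2 Mq hMq, h1]
      exact (Stmt6Aux.sum_seg_md cs φ x hd0 hφ Mq).symm
    have hQ := Q (m + 1)
    have hmd : m ≤ m * d := Nat.le_mul_of_pos_right m hd0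
    have hg : (m + 1) * d = m * d + d := by ring
    have hisLt := i.isLt
    rw [show (m + 1) * d = (d - 1 - (i : ℕ)) + m + ((m + 1) * d - ((d - 1 - (i : ℕ)) + m))
      from by omega] at hQ
    have := Stmt6Aux.red_sub cs φ x hd0 hQ
    have hci : (d : ℤ) - 1 - ((d - 1 - (i : ℕ) : ℕ) : ℤ) = (i : ℤ) := by
      have := i.isLt; omega
    rwa [hci] at this
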